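/- Let n ≥ 2 be an integer and let f be a bounded continuous function on [0,∞). Then ‖Ṽ_n f‖ ≤ 2·‖f‖. -/

import Mathlib

open MeasureTheory Filter Set

/-- Baskakov basis functions `P_{n,k}(x)`, with `P_{n,k} := 0` for `k < 0`. -/
noncomputable def P (n : ℕ) (k : ℤ) (x : ℝ) : ℝ :=
  if k < 0 then 0
  else (Nat.choose (n + k.toNat - 1) k.toNat : ℝ) * x ^ k.toNat * (1 + x) ^ (-(n : ℤ) - k)

/-- The weight `ψ(x) = x(1+x)`. -/
noncomputable def psi (x : ℝ) : ℝ := x * (1 + x)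

/-- The differential operator `D̃ f = ψ f''`. -/
noncomputable def Dt (f : ℝ → ℝ) : ℝ → ℝ := fun x => psi x * deriv (deriv f) x

/-- The functionals `v_{n,k}`. -/
noncomputable def v (n k : ℕ) (f : ℝ → ℝ) : ℝ :=
  if k = 0 then f 0
  else ((n : ℝ) + 1) * ∫ t in Set.Ioi (0 : ℝ), P (n + 2) ((k : ℤ) - 1) t * f t

/-- The Goodman–Sharma–Baskakov operator `V_n`. -/
noncomputable def V (n : ℕ) (f : ℝ → ℝ) (x : ℝ) : ℝ :=
  ∑' k : ℕ, v n k f * P n (k : ℤ) x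

/-- The modified operator `Ṽ_n`. -/
noncomputable def Vt (n : ℕ) (f : ℝ → ℝ) (x : ℝ) : ℝ :=
  ∑' k : ℕ, v n k f * (P n (k : ℤ) x - (1 / (n : ℝ)) * Dt (P n (k : ℤ)) x)

/-- Supremum norm on `[0,∞)`. -/
noncomputable def supNorm (f : ℝ → ℝ) : ℝ := ⨆ x ∈ Set.Ici (0 : ℝ), |f x|

/-- `f` is bounded and continuous on `[0,∞)`. -/
def BddContOn (f : ℝ → ℝ) : Prop :=
  ContinuousOn f (Set.Ici 0) ∧ ∃ M, ∀ x ∈ Set.Ici (0 : ℝ), |f x| ≤ M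

/-- The space `W²(ψ)`: `g, g'` (locally) differentiable on `(0,∞)` and `D̃ g` bounded. -/
def MemW2 (g : ℝ → ℝ) : Prop :=
  DifferentiableOn ℝ g (Set.Ioi 0) ∧ DifferentiableOn ℝ (deriv g) (Set.Ioi 0) ∧
    ∃ M, ∀ x ∈ Set.Ioi (0 : ℝ), |Dt g x| ≤ M

/-- The space `W²₀(ψ)`: members of `W²(ψ)` with `D̃ g(x) → 0` as `x → 0⁺`. -/
def MemW20 (g : ℝ → ℝ) : Prop :=
  MemW2 g ∧ Filter.Tendsto (Dt g) (nhdsWithin 0 (Set.Ioi 0)) (nhds 0)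

/-- The K-functional `K(f,t)`. -/
noncomputable def Kfun (f : ℝ → ℝ) (t : ℝ) : ℝ :=
  sInf {a : ℝ | ∃ g : ℝ → ℝ, MemW20 g ∧ MemW2 (Dt g) ∧
    a = supNorm (fun x => f x - g x) + t * supNorm (Dt (Dt g))}

/-- The function `T_{n,k}(x)`. -/
noncomputable def T (n : ℕ) (k : ℤ) (x : ℝ) : ℝ :=
  (k : ℝ) * ((k : ℝ) - 1) * (1 + x) / x - 2 * (k : ℝ) * ((n : ℝ) + (k : ℝ))
    + ((n : ℝ) + (k : ℝ)) * ((n : ℝ) + (k : ℝ) + 1) * x / (1 + x)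
section Lemmas

lemma P_nonneg (n : ℕ) (k : ℤ) {x : ℝ} (hx : 0 ≤ x) : 0 ≤ P n k x := by
  unfold P
  split
  · exact le_refl 0
  · have h1 : (0:ℝ) ≤ 1 + x := by linarith
    positivity

lemma P_neg (n : ℕ) {k : ℤ} (hk : k < 0) (x : ℝ) : P n k x = 0 := by
  unfold P; rw [if_pos hk]

lemma P_nat (n k : ℕ) (x : ℝ) :
    P n (k : ℤ) x = (Nat.choose (n + k - 1) k : ℝ) * x ^ k * (1 + x) ^ (-(n : ℤ) - k) := by
  unfold P
  rw [if_neg (by simp)]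
  simp

/-- r1 : `k * P_{m,k} = m * x * P_{m+1,k-1}`. -/
lemma P_shift1 {m : ℕ} (hm : 1 ≤ m) (j : ℤ) (x : ℝ) :
    (j : ℝ) * P m j x = (m : ℝ) * x * P (m + 1) (j - 1) x := by
  rcases lt_or_ge j 0 with hj | hj
  · rw [P_neg m hj, P_neg (m+1) (by omega) x]; ring
  · lift j to ℕ using hj with k
    match k with
    | 0 =>
      rw [show (((0:ℕ):ℤ)) - 1 = (-1:ℤ) by norm_num, P_neg (m+1) (by norm_num) x]
      simp
    | (i+1) =>
      have h1 : (((i+1:ℕ)):ℤ) - 1 = ((i:ℕ):ℤ) := by push_cast; ring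
      rw [h1, P_nat, P_nat]
      have hch : (i+1) * Nat.choose (m+i) (i+1) = m * Nat.choose (m+i) i := by
        have := Nat.choose_succ_right_eq (m+i) i
        have h2 : m + i - i = m := by omega
        rw [h2] at this
        rw [Nat.mul_comm, this, Nat.mul_comm]
      have e1 : m+(i+1)-1 = m+i := by omega
      have e2 : m+1+i-1 = m+i := by omega
      have hch' : ((i:ℝ)+1) * (Nat.choose (m+(i+1)-1) (i+1) : ℝ)
          = (m:ℝ) * (Nat.choose (m+1+i-1) i : ℝ) := by
        rw [e1, e2]
        exact_mod_cast congrArg (Nat.cast (R := ℝ)) hch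
      rw [show (-(m:ℤ) - ((i+1:ℕ)):ℤ) = (-((m+1:ℕ):ℤ) - (i:ℕ)) by push_cast; ring]
      push_cast at hch' ⊢
      linear_combination (x^i * x * ((1:ℝ)+x) ^ (-((m:ℤ)+1) - (i:ℤ))) * hch'

end Lemmas
section SumP

/-- The basic normalization `∑_k P_{m,k}(x) = 1`. -/
lemma hasSum_P {m : ℕ} (hm : 1 ≤ m) {x : ℝ} (hx : 0 ≤ x) :
    HasSum (fun k : ℕ => P m (k : ℤ) x) 1 := by
  have h1x : (0:ℝ) < 1 + x := by linarith
  set r : ℝ := x / (1 + x) with hr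
  have hr0 : 0 ≤ r := by positivity
  have hrlt : r < 1 := by
    rw [hr, div_lt_one h1x]; linarith
  have hrn : ‖r‖ < 1 := by rwa [Real.norm_eq_abs, abs_of_nonneg hr0]
  have key : ∀ k : ℕ, P m (k : ℤ) x
      = ((k + (m-1)).choose (m-1) : ℝ) * r ^ k * ((1+x) ^ (-(m:ℤ))) := by
    intro k
    rw [P_nat]
    have e1 : m + k - 1 = k + (m - 1) := by omega
    have e2 : (k + (m-1)).choose (k) = (k + (m-1)).choose (m-1) := Nat.choose_symm_add
    rw [e1, ← e2]
    have e3 : (-(m:ℤ) - (k:ℤ)) = (-(m:ℤ)) + (-(k:ℤ)) := by ring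
    rw [e3, zpow_add₀ (ne_of_gt h1x)]
    have e4 : (1+x) ^ (-(k:ℤ)) = ((1+x) ^ k)⁻¹ := by
      rw [zpow_neg, zpow_natCast]
    have e5 : r ^ k = x ^ k * ((1+x) ^ k)⁻¹ := by
      rw [hr, div_pow]; rw [div_eq_mul_inv]
    rw [e4, e5]; ring
  have base := hasSum_choose_mul_geometric_of_norm_lt_one (𝕜 := ℝ) (m-1) hrn
  have base2 := base.mul_right ((1+x) ^ (-(m:ℤ)))
  have hsum : (1 / (1 - r) ^ ((m-1) + 1)) * ((1+x) ^ (-(m:ℤ))) = 1 := by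
    have e6 : 1 - r = 1 / (1+x) := by
      rw [hr]; field_simp; ring
    have e7 : (m - 1) + 1 = m := by omega
    rw [e6, e7]
    rw [div_pow, one_pow, zpow_neg, zpow_natCast]
    rw [one_div, one_div, inv_inv]
    field_simp
  rw [hsum] at base2
  exact HasSum.congr_fun base2 (fun k => key k)

lemma summable_P {m : ℕ} (hm : 1 ≤ m) {x : ℝ} (hx : 0 ≤ x) :
    Summable (fun k : ℕ => P m (k : ℤ) x) := (hasSum_P hm hx).summable

lemma tsum_P {m : ℕ} (hm : 1 ≤ m) {x : ℝ} (hx : 0 ≤ x) :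
    ∑' k : ℕ, P m (k : ℤ) x = 1 := (hasSum_P hm hx).tsum_eq

end SumP
section SummablePow

lemma summable_pow_mul_P : ∀ (i m : ℕ), 1 ≤ m → ∀ {x : ℝ}, 0 ≤ x →
    Summable (fun k : ℕ => ((k:ℝ) + 1) ^ i * P m (k : ℤ) x) := by
  intro i
  induction i with
  | zero =>
    intro m hm x hx
    simpa using summable_P hm hx
  | succ i ih =>
    intro m hm x hx
    have hg2 : Summable (fun k : ℕ => ((k:ℝ) + 2) ^ i * P (m+1) (k : ℤ) x) := by
      apply Summable.of_nonneg_of_le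
        (f := fun k : ℕ => 2 ^ i * (((k:ℝ) + 1) ^ i * P (m+1) (k:ℤ) x))
      · intro k; have := P_nonneg (m+1) (k:ℤ) hx; positivity
      · intro k
        have h1 : ((k:ℝ) + 2) ^ i ≤ 2 ^ i * ((k:ℝ)+1) ^ i := by
          rw [← mul_pow]
          apply pow_le_pow_left₀ (by positivity)
          linarith
        have h2 := P_nonneg (m+1) (k:ℤ) hx
        calc ((k:ℝ) + 2) ^ i * P (m+1) (k:ℤ) x
            ≤ (2 ^ i * ((k:ℝ)+1) ^ i) * P (m+1) (k:ℤ) x := by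
              apply mul_le_mul_of_nonneg_right h1 h2
          _ = 2 ^ i * (((k:ℝ) + 1) ^ i * P (m+1) (k:ℤ) x) := by ring
      · exact (ih (m+1) (by omega) hx).mul_left _
    set g : ℕ → ℝ := fun k => ((k:ℝ) + 1) ^ i * P (m+1) ((k:ℤ) - 1) x with hgdef
    have hg : Summable g := by
      apply (summable_nat_add_iff 1).mp
      apply hg2.congr
      intro k
      simp only [hgdef]
      push_cast
      rw [show ((k:ℤ) + 1 - 1) = (k:ℤ) by ring]
      ring_nf
    have hcomb : Summable (fun k : ℕ =>
        (m:ℝ) * x * g k + ((k:ℝ) + 1) ^ i * P m (k:ℤ) x) :=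
      (hg.mul_left _).add (ih m hm hx)
    apply hcomb.congr
    intro k
    simp only [hgdef]
    have hr1 : (k:ℝ) * P m (k:ℤ) x = (m:ℝ) * x * P (m+1) ((k:ℤ)-1) x := by
      have := P_shift1 hm (k : ℤ) x
      push_cast at this
      exact this
    calc (m:ℝ) * x * (((k:ℝ) + 1) ^ i * P (m+1) ((k:ℤ)-1) x) + ((k:ℝ)+1)^i * P m (k:ℤ) x
        = ((k:ℝ)+1)^i * ((m:ℝ) * x * P (m+1) ((k:ℤ)-1) x) + ((k:ℝ)+1)^i * P m (k:ℤ) x := by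
          ring
      _ = ((k:ℝ)+1)^i * ((k:ℝ) * P m (k:ℤ) x) + ((k:ℝ)+1)^i * P m (k:ℤ) x := by rw [← hr1]
      _ = ((k:ℝ) + 1) ^ (i+1) * P m (k:ℤ) x := by ring

lemma summable_npow_mul_P (i : ℕ) {m : ℕ} (hm : 1 ≤ m) {x : ℝ} (hx : 0 ≤ x) :
    Summable (fun k : ℕ => (k:ℝ) ^ i * P m (k : ℤ) x) := by
  apply Summable.of_nonneg_of_le (f := fun k : ℕ => ((k:ℝ) + 1) ^ i * P m (k:ℤ) x)
  · intro k; have := P_nonneg m (k:ℤ) hx; positivity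
  · intro k
    apply mul_le_mul_of_nonneg_right _ (P_nonneg m (k:ℤ) hx)
    apply pow_le_pow_left₀ (by positivity)
    linarith
  · exact summable_pow_mul_P i m hm hx

end SummablePow
section Moments

variable {x : ℝ}

lemma mom_rec (i : ℕ) {m : ℕ} (hm : 1 ≤ m) (hx : 0 ≤ x) :
    ∑' k : ℕ, (k:ℝ) ^ (i+1) * P m (k:ℤ) x
      = (m:ℝ) * x * ∑' k : ℕ, ((k:ℝ)+1) ^ i * P (m+1) (k:ℤ) x := by
  set g : ℕ → ℝ := fun k => (k:ℝ) ^ i * ((m:ℝ) * x * P (m+1) ((k:ℤ)-1) x) with hgdef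
  have hshift : HasSum (fun k : ℕ => g (k+1))
      ((m:ℝ) * x * ∑' k : ℕ, ((k:ℝ)+1) ^ i * P (m+1) (k:ℤ) x) := by
    have hs := (summable_pow_mul_P i (m+1) (by omega) hx).hasSum.mul_left ((m:ℝ)*x)
    apply hs.congr_fun
    intro k
    simp only [hgdef]
    push_cast
    rw [show ((k:ℤ) + 1 - 1) = (k:ℤ) by ring]
    ring
  have hg0 : g 0 = 0 := by
    simp only [hgdef]
    rw [show ((0:ℕ):ℤ) - 1 = (-1:ℤ) by norm_num, P_neg (m+1) (by norm_num) x]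
    ring
  have hg : HasSum g ((m:ℝ) * x * ∑' k : ℕ, ((k:ℝ)+1) ^ i * P (m+1) (k:ℤ) x) := by
    have := (hasSum_nat_add_iff (f := g) 1).mp hshift
    simpa [hg0] using this
  rw [← hg.tsum_eq]
  apply tsum_congr
  intro k
  simp only [hgdef]
  have hr1 : (k:ℝ) * P m (k:ℤ) x = (m:ℝ) * x * P (m+1) ((k:ℤ)-1) x := by
    have := P_shift1 hm (k : ℤ) x; push_cast at this; exact this
  calc (k:ℝ) ^ (i+1) * P m (k:ℤ) x = (k:ℝ)^i * ((k:ℝ) * P m (k:ℤ) x) := by ring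
    _ = (k:ℝ)^i * ((m:ℝ) * x * P (m+1) ((k:ℤ)-1) x) := by rw [hr1]

lemma mu1 {m : ℕ} (hm : 1 ≤ m) (hx : 0 ≤ x) :
    ∑' k : ℕ, (k:ℝ) * P m (k:ℤ) x = m * x := by
  have h := mom_rec 0 hm hx
  norm_num at h
  rw [h, tsum_P (by omega) hx, mul_one]

lemma mu2 {m : ℕ} (hm : 1 ≤ m) (hx : 0 ≤ x) :
    ∑' k : ℕ, (k:ℝ)^2 * P m (k:ℤ) x = m * x * ((m+1) * x + 1) := by
  have h := mom_rec 1 hm hx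
  rw [h]
  have s1' : Summable (fun k : ℕ => (k:ℝ) * P (m+1) (k:ℤ) x) := by
    apply (summable_npow_mul_P 1 (m := m+1) (by omega) hx).congr
    intro k; rw [pow_one]
  have hsplit : ∑' k : ℕ, ((k:ℝ)+1) ^ 1 * P (m+1) (k:ℤ) x
      = (∑' k : ℕ, (k:ℝ) * P (m+1) (k:ℤ) x) + ∑' k : ℕ, P (m+1) (k:ℤ) x := by
    rw [← Summable.tsum_add s1' (summable_P (by omega) hx)]
    apply tsum_congr; intro k; ring
  rw [hsplit, mu1 (by omega) hx, tsum_P (by omega) hx]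
  push_cast; ring

lemma mu3 {m : ℕ} (hm : 1 ≤ m) (hx : 0 ≤ x) :
    ∑' k : ℕ, (k:ℝ)^3 * P m (k:ℤ) x
      = m * x * ((m+1) * x * ((m+2) * x + 1) + 2 * (m+1) * x + 1) := by
  have h := mom_rec 2 hm hx
  rw [h]
  have s2 := summable_npow_mul_P 2 (m := m+1) (by omega) hx
  have s0 := summable_P (m := m+1) (by omega) hx
  have s1' : Summable (fun k : ℕ => (k:ℝ) * P (m+1) (k:ℤ) x) := by
    apply (summable_npow_mul_P 1 (m := m+1) (by omega) hx).congr
    intro k; rw [pow_one]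
  have hsplit : ∑' k : ℕ, ((k:ℝ)+1) ^ 2 * P (m+1) (k:ℤ) x
      = (∑' k : ℕ, (k:ℝ)^2 * P (m+1) (k:ℤ) x)
        + (2 * ∑' k : ℕ, (k:ℝ) * P (m+1) (k:ℤ) x + ∑' k : ℕ, P (m+1) (k:ℤ) x) := by
    rw [← tsum_mul_left]
    rw [← Summable.tsum_add (s1'.mul_left 2) s0]
    rw [← Summable.tsum_add s2 ((s1'.mul_left 2).add s0)]
    apply tsum_congr; intro k; push_cast; ring
  rw [hsplit, mu2 (by omega) hx, mu1 (by omega) hx, tsum_P (by omega) hx]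
  push_cast; ring

lemma mu4 {m : ℕ} (hm : 1 ≤ m) (hx : 0 ≤ x) :
    ∑' k : ℕ, (k:ℝ)^4 * P m (k:ℤ) x
      = m * x * ((m+1) * x * ((m+2) * x * ((m+3) * x + 1) + 2 * (m+2) * x + 1)
          + 3 * ((m+1) * x * ((m+2) * x + 1)) + 3 * (m+1) * x + 1) := by
  have h := mom_rec 3 hm hx
  rw [h]
  have s3 := summable_npow_mul_P 3 (m := m+1) (by omega) hx
  have s2 := summable_npow_mul_P 2 (m := m+1) (by omega) hx
  have s1 := summable_npow_mul_P 1 (m := m+1) (by omega) hx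
  have s0 := summable_P (m := m+1) (by omega) hx
  have s1' : Summable (fun k : ℕ => (k:ℝ) * P (m+1) (k:ℤ) x) := by
    apply s1.congr; intro k; rw [pow_one]
  have hsplit : ∑' k : ℕ, ((k:ℝ)+1) ^ 3 * P (m+1) (k:ℤ) x
      = (∑' k : ℕ, (k:ℝ)^3 * P (m+1) (k:ℤ) x)
        + (3 * ∑' k : ℕ, (k:ℝ)^2 * P (m+1) (k:ℤ) x
          + (3 * ∑' k : ℕ, (k:ℝ) * P (m+1) (k:ℤ) x + ∑' k : ℕ, P (m+1) (k:ℤ) x)) := by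
    rw [← tsum_mul_left, ← tsum_mul_left]
    rw [← Summable.tsum_add (s1'.mul_left 3) s0]
    rw [← Summable.tsum_add (s2.mul_left 3) ((s1'.mul_left 3).add s0)]
    rw [← Summable.tsum_add s3 ((s2.mul_left 3).add ((s1'.mul_left 3).add s0))]
    apply tsum_congr; intro k; push_cast; ring
  rw [hsplit, mu3 (by omega) hx, mu2 (by omega) hx, mu1 (by omega) hx, tsum_P (by omega) hx]
  push_cast; ring

end Moments
section QSum

lemma Tval (n k : ℕ) {x : ℝ} (hx : 0 < x) :
    T n (k:ℤ) x = ((k:ℝ)^2 - (1+2*x+2*(n:ℝ)*x)*(k:ℝ))/(x*(1+x))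
      + (n:ℝ)*((n:ℝ)+1)*x/(1+x) := by
  unfold T
  have h1 : (1:ℝ)+x ≠ 0 := by positivity
  have h0 : x ≠ 0 := ne_of_gt hx
  push_cast
  field_simp
  ring

lemma hasSum_Q {n : ℕ} (hn : 1 ≤ n) {x : ℝ} (hx : 0 < x) :
    HasSum (fun k : ℕ => P n (k:ℤ) x * (1 - T n (k:ℤ) x / n)^2)
      ((3*(n:ℝ)+2)/n) := by
  have h1 : (1:ℝ)+x ≠ 0 := by positivity
  have h0 : x ≠ 0 := ne_of_gt hx
  have hnR : (n:ℝ) ≠ 0 := by positivity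
  set β : ℝ := 1+2*x+2*(n:ℝ)*x with hβ
  set u : ℝ := 1/((n:ℝ)*(x*(1+x))) with hu
  set δ : ℝ := 1 - ((n:ℝ)+1)*x/(1+x) with hδ
  set c4 : ℝ := u^2 with hc4
  set c3 : ℝ := -(2*β*u^2) with hc3
  set c2 : ℝ := β^2*u^2 - 2*δ*u with hc2
  set c1 : ℝ := 2*δ*u*β with hc1
  set c0 : ℝ := δ^2 with hc0
  have qident : ∀ k : ℕ, c4*((k:ℝ)^4 * P n (k:ℤ) x) + (c3*((k:ℝ)^3 * P n (k:ℤ) x)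
      + (c2*((k:ℝ)^2 * P n (k:ℤ) x) + (c1*((k:ℝ) * P n (k:ℤ) x) + c0 * P n (k:ℤ) x)))
      = P n (k:ℤ) x * (1 - T n (k:ℤ) x / n)^2 := by
    intro k
    rw [Tval n k hx, hc4, hc3, hc2, hc1, hc0, hβ, hu, hδ]
    field_simp
    ring
  have h4 := (summable_npow_mul_P 4 hn hx.le).hasSum
  rw [mu4 hn hx.le] at h4
  have h3 := (summable_npow_mul_P 3 hn hx.le).hasSum
  rw [mu3 hn hx.le] at h3
  have h2 := (summable_npow_mul_P 2 hn hx.le).hasSum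
  rw [mu2 hn hx.le] at h2
  have hs1 : Summable (fun k : ℕ => (k:ℝ) * P n (k:ℤ) x) := by
    apply (summable_npow_mul_P 1 hn hx.le).congr
    intro k; rw [pow_one]
  have h1' := hs1.hasSum
  rw [mu1 hn hx.le] at h1'
  have h0' := (summable_P hn hx.le).hasSum
  rw [tsum_P hn hx.le] at h0'
  have hcomb := (h4.mul_left c4).add ((h3.mul_left c3).add ((h2.mul_left c2).add
    ((h1'.mul_left c1).add (h0'.mul_left c0))))
  have hval : c4*((n:ℝ) * x * ((n+1) * x * ((n+2) * x * ((n+3) * x + 1) + 2 * (n+2) * x + 1)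
          + 3 * ((n+1) * x * ((n+2) * x + 1)) + 3 * (n+1) * x + 1))
      + (c3*((n:ℝ) * x * ((n+1) * x * ((n+2) * x + 1) + 2 * (n+1) * x + 1))
      + (c2*((n:ℝ) * x * ((n+1) * x + 1)) + (c1*((n:ℝ)*x) + c0 * 1)))
      = (3*(n:ℝ)+2)/n := by
    rw [hc4, hc3, hc2, hc1, hc0, hβ, hu, hδ]
    field_simp
    ring
  rw [hval] at hcomb
  exact hcomb.congr_fun (fun k => (qident k).symm)

end QSum
section Deriv

lemma P_eq_fun (n k : ℕ) : P n (k:ℤ) = fun y : ℝ =>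
    (Nat.choose (n + k - 1) k : ℝ) * (y ^ k * (1 + y) ^ (-(n : ℤ) - k)) := by
  funext y
  rw [P_nat]; ring

lemma hasDerivAt_P (n k : ℕ) {y : ℝ} (hy : (0:ℝ) < 1 + y) :
    HasDerivAt (P n (k:ℤ))
      ((Nat.choose (n + k - 1) k : ℝ) *
        ((k:ℝ) * y^(k-1) * (1+y)^(-(n:ℤ)-k)
          + y^k * ((-(n:ℤ)-k : ℤ) * (1+y)^((-(n:ℤ)-k) - 1)))) y := by
  rw [P_eq_fun]
  have h1y : HasDerivAt (fun t : ℝ => 1 + t) 1 y := by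
    simpa using (hasDerivAt_id y).const_add (1:ℝ)
  have hz : HasDerivAt (fun t : ℝ => (1+t)^(-(n:ℤ)-k))
      (((-(n:ℤ)-k : ℤ) : ℝ) * (1+y)^((-(n:ℤ)-k) - 1)) y := by
    have := (hasDerivAt_zpow (-(n:ℤ)-k) (1+y) (Or.inl (ne_of_gt hy))).comp y h1y
    simpa [Function.comp_def] using this
  have hp : HasDerivAt (fun t : ℝ => t ^ k) ((k:ℝ) * y^(k-1)) y := hasDerivAt_pow k y
  have := (hp.mul hz).const_mul ((Nat.choose (n + k - 1) k : ℝ))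
  exact this

/-- second derivative formula candidate -/
noncomputable def F2 (n k : ℕ) (y : ℝ) : ℝ :=
  (Nat.choose (n + k - 1) k : ℝ) *
    ((k:ℝ) * ((k-1:ℕ):ℝ) * y^(k-2) * (1+y)^(-(n:ℤ)-k)
      + 2*(k:ℝ) * ((-(n:ℤ)-k : ℤ) : ℝ) * y^(k-1) * (1+y)^((-(n:ℤ)-k)-1)
      + ((-(n:ℤ)-k : ℤ) : ℝ) * (((-(n:ℤ)-k : ℤ) : ℝ) - 1) * y^k * (1+y)^((-(n:ℤ)-k)-2))

lemma deriv2_P (n k : ℕ) {x : ℝ} (hx : (0:ℝ) < x) :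
    deriv (deriv (P n (k:ℤ))) x = F2 n k x := by
  set m : ℤ := -(n:ℤ) - k with hm
  set c : ℝ := (Nat.choose (n + k - 1) k : ℝ) with hc
  set F1 : ℝ → ℝ := fun y =>
    c * ((k:ℝ) * y^(k-1) * (1+y)^m + y^k * ((m:ℝ) * (1+y)^(m - 1))) with hF1
  have hev : deriv (P n (k:ℤ)) =ᶠ[nhds x] F1 := by
    have hopen : IsOpen {y : ℝ | (0:ℝ) < 1 + y} := isOpen_lt continuous_const (by continuity)
    have hmem : {y : ℝ | (0:ℝ) < 1 + y} ∈ nhds x :=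
      hopen.mem_nhds (by simp only [Set.mem_setOf_eq]; linarith)
    filter_upwards [hmem] with y hy
    exact (hasDerivAt_P n k hy).deriv
  rw [hev.deriv_eq]
  have h1y : HasDerivAt (fun t : ℝ => 1 + t) 1 x := by
    simpa using (hasDerivAt_id x).const_add (1:ℝ)
  have hx1 : (0:ℝ) < 1 + x := by linarith
  have hz : ∀ j : ℤ, HasDerivAt (fun t : ℝ => (1+t)^j) ((j : ℝ) * (1+x)^(j - 1)) x := by
    intro j
    have := (hasDerivAt_zpow j (1+x) (Or.inl (ne_of_gt hx1))).comp x h1y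
    simpa [Function.comp_def] using this
  have hp : ∀ j : ℕ, HasDerivAt (fun t : ℝ => t ^ j) ((j:ℝ) * x^(j-1)) x :=
    fun j => hasDerivAt_pow j x
  have hd : HasDerivAt F1
      (c * (((k:ℝ) * (((k-1:ℕ):ℝ) * x^(k-1-1))) * (1+x)^m
        + ((k:ℝ) * x^(k-1)) * ((m:ℝ) * (1+x)^(m-1))
        + (((k:ℝ) * x^(k-1)) * ((m:ℝ) * (1+x)^(m - 1))
          + x^k * ((m:ℝ) * (((m-1:ℤ):ℝ) * (1+x)^(m-1-1)))))) x := by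
    have ha := ((hp (k-1)).const_mul (k:ℝ)).mul (hz m)
    have hb := (hp k).mul ((hz (m-1)).const_mul (m:ℝ))
    have := (ha.add hb).const_mul c
    exact this
  rw [hd.deriv]
  unfold F2
  rw [← hm, ← hc]
  have e1 : k - 1 - 1 = k - 2 := by omega
  have e2 : m - 1 - 1 = m - 2 := by ring
  rw [e1, e2]
  push_cast
  ring

lemma Dt_P (n k : ℕ) {x : ℝ} (hx : (0:ℝ) < x) :
    Dt (P n (k:ℤ)) x = P n (k:ℤ) x * T n (k:ℤ) x := by
  unfold Dt
  rw [deriv2_P n k hx]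
  have hx1 : (0:ℝ) < 1 + x := by linarith
  have hx1' : (1:ℝ) + x ≠ 0 := ne_of_gt hx1
  have hx0 : x ≠ 0 := ne_of_gt hx
  set m : ℤ := -(n:ℤ) - k with hm
  have hz1 : (1+x)^(m - 1) = (1+x)^m * (1+x)⁻¹ := by
    rw [zpow_sub_one₀ hx1']
  have hz2 : (1+x)^(m - 2) = (1+x)^m * (1+x)⁻¹ * (1+x)⁻¹ := by
    rw [show m - 2 = (m - 1) - 1 by ring, zpow_sub_one₀ hx1', hz1]
  have hmr : ((m:ℤ):ℝ) = -(n:ℝ) - k := by push_cast [hm]; ring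
  unfold F2 psi
  rw [P_nat, ← hm, hz1, hz2, hmr]
  unfold T
  push_cast
  match k with
  | 0 =>
    push_cast
    field_simp
    ring
  | 1 =>
    push_cast
    norm_num
    field_simp
    ring
  | (i+2) =>
    have ex1 : (i+2) - 1 = i+1 := by omega
    have ex2 : (i+2) - 2 = i := by omega
    rw [ex1, ex2]
    push_cast
    field_simp
    ring

end Deriv
section Integral

lemma P_contOn (m j : ℕ) : ContinuousOn (fun t : ℝ => P m (j:ℤ) t) (Set.Ioi 0) := by
  intro t ht
  have h1t : (0:ℝ) < 1 + t := by
    have : (0:ℝ) < t := ht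
    linarith
  exact ((hasDerivAt_P m j h1t).continuousAt).continuousWithinAt

lemma tendsto_P_atTop {m : ℕ} (hm : 1 ≤ m) (j : ℕ) :
    Filter.Tendsto (fun t : ℝ => P m (j:ℤ) t) Filter.atTop (nhds 0) := by
  have hlim : Filter.Tendsto
      (fun t : ℝ => (Nat.choose (m+j-1) j : ℝ) * (1+t) ^ (-(m:ℤ)))
      Filter.atTop (nhds 0) := by
    have h1 : Filter.Tendsto (fun t : ℝ => 1 + t) Filter.atTop Filter.atTop :=
      Filter.tendsto_atTop_add_const_left _ 1 Filter.tendsto_id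
    have h2 : Filter.Tendsto (fun s : ℝ => s ^ (-(m:ℤ))) Filter.atTop (nhds 0) :=
      tendsto_zpow_atTop_zero (by omega)
    simpa using (h2.comp h1).const_mul (Nat.choose (m+j-1) j : ℝ)
  apply squeeze_zero' ?_ ?_ hlim
  · filter_upwards [Filter.eventually_ge_atTop (0:ℝ)] with t ht
    exact P_nonneg m j ht
  · filter_upwards [Filter.eventually_ge_atTop (0:ℝ)] with t ht
    rw [P_nat]
    have h1t : (0:ℝ) < 1+t := by linarith
    have hb : t ^ j ≤ (1+t) ^ j := pow_le_pow_left₀ ht (by linarith) j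
    have hz : ((1+t):ℝ) ^ (j:ℤ) * (1+t) ^ (-(m:ℤ)-j) = (1+t) ^ (-(m:ℤ)) := by
      rw [← zpow_add₀ (ne_of_gt h1t)]
      norm_num
    calc (Nat.choose (m+j-1) j : ℝ) * t^j * (1+t)^(-(m:ℤ)-j)
        ≤ (Nat.choose (m+j-1) j : ℝ) * (1+t)^j * (1+t)^(-(m:ℤ)-j) := by
          have hzpos : (0:ℝ) ≤ (1+t)^(-(m:ℤ)-j) := by positivity
          have hc : (0:ℝ) ≤ (Nat.choose (m+j-1) j : ℝ) := by positivity
          apply mul_le_mul_of_nonneg_right _ hzpos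
          exact mul_le_mul_of_nonneg_left hb hc
      _ = (Nat.choose (m+j-1) j : ℝ) * (1+t)^(-(m:ℤ)) := by
          rw [mul_assoc, ← zpow_natCast ((1:ℝ)+t) j, hz]

lemma deriv_P_key {m : ℕ} (hm : 1 ≤ m) (j : ℕ) {t : ℝ} (h1t : (0:ℝ) < 1 + t) :
    HasDerivAt (fun s : ℝ => -(P m ((j+1:ℕ):ℤ) s))
      ((m:ℝ) * (P (m+1) ((j+1:ℕ):ℤ) t - P (m+1) (j:ℤ) t)) t := by
  have hd := (hasDerivAt_P m (j+1) h1t).neg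
  refine hd.congr_deriv ?_
  symm
  have h1t' : (1:ℝ)+t ≠ 0 := ne_of_gt h1t
  have hA : ((j:ℝ)+1) * (Nat.choose (m+j) (j+1) : ℝ) = (m:ℝ) * (Nat.choose (m+j) j : ℝ) := by
    have h := Nat.choose_succ_right_eq (m+j) j
    have h2 : m + j - j = m := by omega
    rw [h2] at h
    exact_mod_cast congrArg (Nat.cast (R := ℝ)) (by rw [Nat.mul_comm] at h; rw [h, Nat.mul_comm])
  have hB : ((m:ℝ)+j+1) * (Nat.choose (m+j) (j+1) : ℝ)
      = (m:ℝ) * (Nat.choose (m+j+1) (j+1) : ℝ) := by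
    have h := Nat.choose_mul_succ_eq (m+j) (j+1)
    have h2 : m + j + 1 - (j+1) = m := by omega
    exact_mod_cast congrArg (Nat.cast (R := ℝ))
      (by rw [Nat.mul_comm (m+j+1), h, h2, Nat.mul_comm])
  rw [P_nat, P_nat]
  have e1 : m + (j+1) - 1 = m + j := by omega
  have e2 : (m+1) + (j+1) - 1 = m + j + 1 := by omega
  have e3 : (m+1) + j - 1 = m + j := by omega
  rw [e1, e2, e3]
  rw [show (-(m:ℤ) - ((j+1:ℕ):ℤ)) = (-((m+1:ℕ):ℤ) - (j:ℤ)) by push_cast; ring]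
  rw [show (-((m+1:ℕ):ℤ) - (j:ℤ) - 1) = (-((m+1:ℕ):ℤ) - ((j+1:ℕ):ℤ)) by push_cast; ring]
  rw [show (-((m+1:ℕ):ℤ) - ((j+1:ℕ):ℤ)) = (-((m+1:ℕ):ℤ) - (j:ℤ)) - 1 by push_cast; ring]
  rw [zpow_sub_one₀ h1t']
  set z : ℝ := (1+t) ^ (-((m+1:ℕ):ℤ) - (j:ℤ)) with hz
  rw [show j + 1 - 1 = j by omega, pow_succ]
  push_cast
  linear_combination (t^j * z) * hA + (-(t^j * t * z * (1+t)⁻¹)) * hB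

end Integral
section IntegralMain

lemma integral_P {m : ℕ} (hm : 1 ≤ m) (j : ℕ) :
    IntegrableOn (fun t : ℝ => P (m+1) (j:ℤ) t) (Set.Ioi 0) volume ∧
      ∫ t in Set.Ioi 0, P (m+1) (j:ℤ) t = 1/(m:ℝ) := by
  have hmne : (m:ℝ) ≠ 0 := by positivity
  induction j with
  | zero =>
    have hg : ∀ t ∈ Set.Ici (0:ℝ), HasDerivAt (fun s : ℝ => -(1/(m:ℝ)) * (1+s)^(-(m:ℤ)))
        (P (m+1) ((0:ℕ):ℤ) t) t := by
      intro t ht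
      have h1t : (0:ℝ) < 1 + t := by
        have : (0:ℝ) ≤ t := ht
        linarith
      have h1y : HasDerivAt (fun s : ℝ => 1 + s) 1 t := by
        simpa using (hasDerivAt_id t).const_add (1:ℝ)
      have hz : HasDerivAt (fun s : ℝ => (1+s)^(-(m:ℤ)))
          (((-(m:ℤ)):ℝ) * (1+t)^(-(m:ℤ) - 1)) t := by
        have := (hasDerivAt_zpow (-(m:ℤ)) (1+t) (Or.inl (ne_of_gt h1t))).comp t h1y
        simpa [Function.comp_def] using this
      have := hz.const_mul (-(1/(m:ℝ)))
      refine this.congr_deriv ?_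
      symm
      rw [P_nat]
      have e1 : m + 1 + 0 - 1 = m := by omega
      rw [e1]
      simp only [Nat.choose_zero_right, Nat.cast_one, pow_zero]
      rw [show (-((m+1:ℕ):ℤ) - ((0:ℕ):ℤ)) = -(m:ℤ) - 1 by push_cast; ring]
      push_cast
      field_simp
    have hpos : ∀ t ∈ Set.Ioi (0:ℝ), 0 ≤ P (m+1) ((0:ℕ):ℤ) t := by
      intro t ht
      exact P_nonneg (m+1) _ (le_of_lt ht)
    have htend : Filter.Tendsto (fun s : ℝ => -(1/(m:ℝ)) * (1+s)^(-(m:ℤ)))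
        Filter.atTop (nhds 0) := by
      have h1 : Filter.Tendsto (fun t : ℝ => 1 + t) Filter.atTop Filter.atTop :=
        Filter.tendsto_atTop_add_const_left _ 1 Filter.tendsto_id
      have h2 : Filter.Tendsto (fun s : ℝ => s ^ (-(m:ℤ))) Filter.atTop (nhds 0) :=
        tendsto_zpow_atTop_zero (by omega)
      simpa using (h2.comp h1).const_mul (-(1/(m:ℝ)))
    constructor
    · exact integrableOn_Ioi_deriv_of_nonneg' hg hpos htend
    · rw [integral_Ioi_of_hasDerivAt_of_nonneg' hg hpos htend]
      norm_num
  | succ j ih =>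
    -- integrability of P (m+1) (j+1) by comparison
    have hmj : (1:ℝ) ≤ (Nat.choose (m+j) j : ℝ) := by
      exact_mod_cast Nat.one_le_iff_ne_zero.mpr (Nat.choose_pos (by omega)).ne'
    have hint : IntegrableOn (fun t : ℝ => P (m+1) ((j+1:ℕ):ℤ) t) (Set.Ioi 0) volume := by
      apply Integrable.mono (ih.1.const_mul (Nat.choose (m+j+1) (j+1) : ℝ))
      · exact ((P_contOn (m+1) (j+1)).aestronglyMeasurable measurableSet_Ioi)
      · rw [MeasureTheory.ae_restrict_iff' measurableSet_Ioi]
        apply Filter.Eventually.of_forall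
        intro t ht
        have ht0 : (0:ℝ) < t := ht
        have h1t : (0:ℝ) < 1 + t := by linarith
        have hnn1 := P_nonneg (m+1) ((j+1:ℕ):ℤ) ht0.le
        have hnn0 := P_nonneg (m+1) (j:ℤ) ht0.le
        rw [Real.norm_eq_abs, Real.norm_eq_abs, abs_of_nonneg hnn1,
          abs_of_nonneg (by positivity)]
        rw [P_nat, P_nat]
        have e2 : (m+1) + (j+1) - 1 = m + j + 1 := by omega
        have e3 : (m+1) + j - 1 = m + j := by omega
        rw [e2, e3]
        rw [show (-((m+1:ℕ):ℤ) - ((j+1:ℕ):ℤ)) = (-((m+1:ℕ):ℤ) - (j:ℤ)) - 1 by push_cast; ring]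
        rw [zpow_sub_one₀ (ne_of_gt h1t), pow_succ]
        have hz0 : (0:ℝ) < (1+t) ^ (-((m+1:ℕ):ℤ) - (j:ℤ)) := by positivity
        have hkey : t * (1+t)⁻¹ ≤ 1 := by
          rw [mul_inv_le_iff₀ h1t]; linarith
        calc (Nat.choose (m+j+1) (j+1) : ℝ) * (t^j * t) * ((1+t) ^ (-((m+1:ℕ):ℤ) - (j:ℤ)) * (1+t)⁻¹)
            = ((Nat.choose (m+j+1) (j+1) : ℝ) * t^j * (1+t) ^ (-((m+1:ℕ):ℤ) - (j:ℤ))) * (t * (1+t)⁻¹) := by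
              ring
          _ ≤ ((Nat.choose (m+j+1) (j+1) : ℝ) * t^j * (1+t) ^ (-((m+1:ℕ):ℤ) - (j:ℤ))) * 1 := by
              apply mul_le_mul_of_nonneg_left hkey (by positivity)
          _ = (Nat.choose (m+j+1) (j+1) : ℝ) * (1 * t^j * (1+t) ^ (-((m+1:ℕ):ℤ) - (j:ℤ))) := by
              ring
          _ ≤ (Nat.choose (m+j+1) (j+1) : ℝ)
              * ((Nat.choose (m+j) j : ℝ) * t^j * (1+t) ^ (-((m+1:ℕ):ℤ) - (j:ℤ))) := by
              apply mul_le_mul_of_nonneg_left _ (by positivity)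
              apply mul_le_mul_of_nonneg_right _ (le_of_lt hz0)
              apply mul_le_mul_of_nonneg_right hmj (by positivity)
    -- FTC for the difference
    have hderiv : ∀ t ∈ Set.Ioi (0:ℝ), HasDerivAt (fun s : ℝ => -(P m ((j+1:ℕ):ℤ) s))
        ((m:ℝ) * (P (m+1) ((j+1:ℕ):ℤ) t - P (m+1) (j:ℤ) t)) t := by
      intro t ht
      have ht0 : (0:ℝ) < t := ht
      exact deriv_P_key hm j (by linarith)
    have hcont : ContinuousWithinAt (fun s : ℝ => -(P m ((j+1:ℕ):ℤ) s)) (Set.Ici 0) 0 :=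
      ((deriv_P_key hm j (by norm_num : (0:ℝ) < 1 + 0)).continuousAt).continuousWithinAt
    have hdint : IntegrableOn (fun t : ℝ =>
        (m:ℝ) * (P (m+1) ((j+1:ℕ):ℤ) t - P (m+1) (j:ℤ) t)) (Set.Ioi 0) volume :=
      ((hint.sub ih.1).const_mul _)
    have htend : Filter.Tendsto (fun s : ℝ => -(P m ((j+1:ℕ):ℤ) s)) Filter.atTop (nhds 0) := by
      have := (tendsto_P_atTop hm (j+1)).neg
      simpa using this
    have hFTC := integral_Ioi_of_hasDerivAt_of_tendsto hcont hderiv hdint htend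
    have hP0 : P m ((j+1:ℕ):ℤ) 0 = 0 := by
      rw [P_nat]
      simp
    rw [hP0] at hFTC
    simp only [neg_zero, sub_zero] at hFTC
    -- hFTC : ∫ m * (P_{j+1} - P_j) = 0
    rw [integral_const_mul] at hFTC
    have hzero : ∫ t in Set.Ioi 0, (P (m+1) ((j+1:ℕ):ℤ) t - P (m+1) (j:ℤ) t) = 0 := by
      rcases mul_eq_zero.mp hFTC with h | h
      · exact absurd h hmne
      · exact h
    rw [MeasureTheory.integral_sub hint ih.1, ih.2, sub_eq_zero] at hzero
    exact ⟨hint, hzero⟩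

end IntegralMain
section Bounds

lemma supNorm_bddAbove (f : ℝ → ℝ) (hf : BddContOn f) :
    BddAbove (Set.range (fun x : ℝ => ⨆ _ : x ∈ Set.Ici (0:ℝ), |f x|)) := by
  obtain ⟨M0, hM0⟩ := hf.2
  refine ⟨max M0 0, ?_⟩
  rintro y ⟨x, rfl⟩
  dsimp only
  by_cases hx : x ∈ Set.Ici (0:ℝ)
  · rw [ciSup_pos hx]
    exact le_max_of_le_left (hM0 x hx)
  · haveI : IsEmpty (x ∈ Set.Ici (0:ℝ)) := ⟨fun h => hx h⟩
    rw [Real.iSup_of_isEmpty]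
    exact le_max_right _ _

lemma abs_le_supNorm (f : ℝ → ℝ) (hf : BddContOn f) {t : ℝ} (ht : 0 ≤ t) :
    |f t| ≤ supNorm f := by
  have hb := supNorm_bddAbove f hf
  have h1 : |f t| = ⨆ _ : t ∈ Set.Ici (0:ℝ), |f t| := (ciSup_pos (f := fun _ : t ∈ Set.Ici (0:ℝ) => |f t|) ht).symm
  rw [supNorm, h1]
  exact le_ciSup hb t

lemma supNorm_nonneg (f : ℝ → ℝ) (hf : BddContOn f) : 0 ≤ supNorm f :=
  le_trans (abs_nonneg _) (abs_le_supNorm f hf le_rfl)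

lemma supNorm_le (g : ℝ → ℝ) {c : ℝ} (hc : 0 ≤ c) (h : ∀ x, 0 ≤ x → |g x| ≤ c) :
    supNorm g ≤ c := by
  apply Real.iSup_le _ hc
  intro x
  apply Real.iSup_le _ hc
  intro hx
  exact h x hx

lemma v_bound (n : ℕ) (hn : 2 ≤ n) (f : ℝ → ℝ) (hf : BddContOn f) (k : ℕ) :
    |v n k f| ≤ supNorm f := by
  match k with
  | 0 =>
    rw [v, if_pos rfl]
    exact abs_le_supNorm f hf le_rfl
  | (j+1) =>
    rw [v, if_neg (by omega)]
    rw [show (((j+1:ℕ)):ℤ) - 1 = (j:ℤ) by push_cast; ring]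
    have hIP := integral_P (m := n+1) (by omega) j
    by_cases hInt : IntegrableOn (fun t : ℝ => P (n+2) (j:ℤ) t * f t) (Set.Ioi 0) volume
    · have hbd : ‖∫ t in Set.Ioi 0, P (n+2) (j:ℤ) t * f t‖
          ≤ ∫ t in Set.Ioi 0, supNorm f * P (n+2) (j:ℤ) t := by
        apply norm_integral_le_of_norm_le (hIP.1.const_mul (supNorm f))
        rw [MeasureTheory.ae_restrict_iff' measurableSet_Ioi]
        apply Filter.Eventually.of_forall
        intro t ht
        have ht0 : (0:ℝ) < t := ht
        have hnn := P_nonneg (n+2) (j:ℤ) ht0.le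
        rw [Real.norm_eq_abs, abs_mul, abs_of_nonneg hnn]
        calc P (n+2) (j:ℤ) t * |f t| ≤ P (n+2) (j:ℤ) t * supNorm f :=
              mul_le_mul_of_nonneg_left (abs_le_supNorm f hf ht0.le) hnn
          _ = supNorm f * P (n+2) (j:ℤ) t := by ring
      rw [MeasureTheory.integral_const_mul, hIP.2] at hbd
      rw [abs_mul]
      have he : |((n:ℝ)+1)| = (n:ℝ)+1 := abs_of_nonneg (by positivity)
      rw [he]
      have hnn1 : (0:ℝ) < (n:ℝ)+1 := by positivity
      calc ((n:ℝ)+1) * |∫ t in Set.Ioi 0, P (n+2) (j:ℤ) t * f t|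
          ≤ ((n:ℝ)+1) * (supNorm f * (1/((n:ℝ)+1))) := by
            apply mul_le_mul_of_nonneg_left _ hnn1.le
            have := hbd
            rw [Real.norm_eq_abs] at this
            convert this using 2
            · rfl
            push_cast
            ring
        _ = supNorm f := by field_simp
    · rw [MeasureTheory.integral_undef hInt]
      rw [mul_zero, abs_zero]
      exact supNorm_nonneg f hf

end Bounds
theorem Vt_norm_bound (n : ℕ) (hn : 2 ≤ n) (f : ℝ → ℝ) (hf : BddContOn f) :
    supNorm (Vt n f) ≤ 2 * supNorm f := by
  have hM0 : 0 ≤ supNorm f := supNorm_nonneg f hf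
  apply supNorm_le _ (by linarith)
  intro x hx
  rcases eq_or_lt_of_le hx with hx0 | hxpos
  · -- x = 0 case
    rw [← hx0]
    have hDt0 : ∀ k : ℕ, Dt (P n (k:ℤ)) 0 = 0 := by
      intro k
      unfold Dt psi
      norm_num
    have hVt0 : Vt n f 0 = f 0 := by
      unfold Vt
      rw [tsum_eq_single 0 ?_]
      · have hP00 : P n ((0:ℕ):ℤ) 0 = 1 := by
          rw [P_nat]; simp
        rw [hP00, hDt0 0, v, if_pos rfl]
        ring
      · intro k hk
        have hPk0 : P n (k:ℤ) 0 = 0 := by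
          rw [P_nat]
          rw [zero_pow (by simpa using hk)]
          ring
        rw [hPk0, hDt0 k]
        ring
    rw [hVt0]
    calc |f 0| ≤ supNorm f := abs_le_supNorm f hf le_rfl
      _ ≤ 2 * supNorm f := by linarith
  · -- x > 0 case
    set M := supNorm f with hMdef
    have hn1 : 1 ≤ n := by omega
    have hQ := hasSum_Q (n := n) hn1 hxpos
    have hsP := summable_P (m := n) hn1 hxpos.le
    have hsb : Summable (fun k : ℕ =>
        M * (P n (k:ℤ) x + P n (k:ℤ) x * (1 - T n (k:ℤ) x/(n:ℝ))^2 / 4)) :=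
      (hsP.add (hQ.summable.div_const 4)).mul_left M
    have habs : ∀ k : ℕ, ‖v n k f * (P n (k:ℤ) x * (1 - T n (k:ℤ) x / (n:ℝ)))‖
        ≤ M * (P n (k:ℤ) x + P n (k:ℤ) x * (1 - T n (k:ℤ) x/(n:ℝ))^2 / 4) := by
      intro k
      set w : ℝ := 1 - T n (k:ℤ) x/(n:ℝ) with hw
      clear_value w
      have hP := P_nonneg n (k:ℤ) hxpos.le
      have habsw : |w| ≤ 1 + w^2/4 := by
        nlinarith [sq_nonneg (|w| - 2), sq_abs w, abs_nonneg w]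
      rw [Real.norm_eq_abs, abs_mul, abs_mul, abs_of_nonneg hP]
      calc |v n k f| * (P n (k:ℤ) x * |w|)
          ≤ M * (P n (k:ℤ) x * |w|) := by
            apply mul_le_mul_of_nonneg_right (v_bound n hn f hf k) (by positivity)
        _ ≤ M * (P n (k:ℤ) x * (1 + w^2/4)) := by
            apply mul_le_mul_of_nonneg_left _ hM0
            exact mul_le_mul_of_nonneg_left habsw hP
        _ = M * (P n (k:ℤ) x + P n (k:ℤ) x * w^2 / 4) := by ring
    have hVx : Vt n f x = ∑' k : ℕ, v n k f * (P n (k:ℤ) x * (1 - T n (k:ℤ) x / (n:ℝ))) := by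
      unfold Vt
      apply tsum_congr
      intro k
      rw [Dt_P n k hxpos]
      ring
    have hsn : Summable (fun k : ℕ =>
        ‖v n k f * (P n (k:ℤ) x * (1 - T n (k:ℤ) x / (n:ℝ)))‖) :=
      Summable.of_nonneg_of_le (fun k => norm_nonneg _) habs hsb
    have hq4 : ((3*(n:ℝ)+2)/(n:ℝ)) ≤ 4 := by
      rw [div_le_iff₀ (by positivity)]
      have : (2:ℝ) ≤ (n:ℝ) := by exact_mod_cast hn
      nlinarith
    calc |Vt n f x|
        = ‖∑' k : ℕ, v n k f * (P n (k:ℤ) x * (1 - T n (k:ℤ) x / (n:ℝ)))‖ := by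
          rw [hVx, Real.norm_eq_abs]
      _ ≤ ∑' k : ℕ, ‖v n k f * (P n (k:ℤ) x * (1 - T n (k:ℤ) x / (n:ℝ)))‖ :=
          norm_tsum_le_tsum_norm hsn
      _ ≤ ∑' k : ℕ, M * (P n (k:ℤ) x + P n (k:ℤ) x * (1 - T n (k:ℤ) x/(n:ℝ))^2 / 4) :=
          hsn.tsum_le_tsum habs hsb
      _ = M * (1 + ((3*(n:ℝ)+2)/(n:ℝ))/4) := by
          rw [tsum_mul_left]
          congr 1
          rw [Summable.tsum_add hsP (hQ.summable.div_const 4)]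
          rw [tsum_P hn1 hxpos.le, tsum_div_const, hQ.tsum_eq]
      _ ≤ 2 * M := by nlinarith
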